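/- Let d be a homogeneous distance on ℍ¹ with closed unit ball B at the origin, and suppose there are sequences p_n^± = (x_n^±, 0, z_n^±) ∈ ∂B with z_n^± > 0, x_n^- < 0 < x_n^+, x_n^+ − x_n^- → 0, z_n^- > z_n^+ > 0, z_n^+ − z_n^- < −a(x_n^+ − x_n^-) for some a > 0, and {p : x_n^+ ≤ x_p ≤ x̄, y_p = 0, z_p > z_n^+} ⊂ ℍ¹ \ B for some x̄ > 0. Then the Weak Besicovitch Covering Property fails for d: for every N there exists a family of N+1 closed d-balls with nonempty common intersection such that no ball contains the center of another. -/

import Mathlib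

open Real

abbrev H : Type := ℝ × ℝ × ℝ

noncomputable section

/-- Heisenberg group law on ℝ³. -/
def hmul (p q : H) : H :=
  (p.1 + q.1, p.2.1 + q.2.1, p.2.2 + q.2.2 + (p.1 * q.2.1 - p.2.1 * q.1) / 2)

/-- Heisenberg inverse. -/
def hinv (p : H) : H := (-p.1, -p.2.1, -p.2.2)

/-- Heisenberg dilation. -/
def hdil (l : ℝ) (p : H) : H := (l * p.1, l * p.2.1, l ^ 2 * p.2.2)

/-- Horizontal norm ρ. -/
def rho (p : H) : ℝ := Real.sqrt (p.1 ^ 2 + p.2.1 ^ 2)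

set_option maxHeartbeats 1000000 in
theorem stmt16 (d : H → H → ℝ)
    (hzero : ∀ p q : H, d p q = 0 ↔ p = q)
    (hsymm : ∀ p q : H, d p q = d q p)
    (htri : ∀ p q r : H, d p r ≤ d p q + d q r)
    (hleft : ∀ g p q : H, d (hmul g p) (hmul g q) = d p q)
    (hhom : ∀ l : ℝ, 0 < l → ∀ p q : H, d (hdil l p) (hdil l q) = l * d p q)
    (a xbar : ℝ) (ha : 0 < a) (hxbar : 0 < xbar)
    (xp xm zp zm : ℕ → ℝ)
    (hsphere_p : ∀ n, d 0 ((xp n, 0, zp n) : H) = 1)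
    (hsphere_m : ∀ n, d 0 ((xm n, 0, zm n) : H) = 1)
    (hsign : ∀ n, xm n < 0 ∧ 0 < xp n)
    (hgap : Filter.Tendsto (fun n => xp n - xm n) Filter.atTop (nhds 0))
    (hz : ∀ n, zm n > zp n ∧ zp n > 0)
    (hslope : ∀ n, zp n - zm n < -a * (xp n - xm n))
    (hout : ∀ n, ∀ q : H, xp n ≤ q.1 → q.1 ≤ xbar → q.2.1 = 0 → zp n < q.2.2 → 1 < d 0 q) :
    ∀ N : ℕ, ∃ (x : Fin (N + 1) → H) (r : Fin (N + 1) → ℝ),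
      (∀ i, 0 < r i) ∧ (∀ i j, i ≠ j → r j < d (x i) (x j)) ∧ ∃ y : H, ∀ i, d y (x i) ≤ r i := by
  -- basic group facts
  have hmul_zero_right : ∀ p : H, hmul p 0 = p := by
    intro p; simp [hmul]
  have hmul_inv : ∀ p : H, hmul p (hinv p) = 0 := by
    intro p
    have h : hmul p (hinv p) = ((0 : ℝ), (0 : ℝ), (0 : ℝ)) := by
      simp only [hmul, hinv, Prod.mk.injEq]
      refine ⟨by ring, by ring, by ring⟩
    exact h
  have hinv_mul : ∀ p : H, hmul (hinv p) p = 0 := by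
    intro p
    have h : hmul (hinv p) p = ((0 : ℝ), (0 : ℝ), (0 : ℝ)) := by
      simp only [hmul, hinv, Prod.mk.injEq]
      refine ⟨by ring, by ring, by ring⟩
    exact h
  have hd_symm0 : ∀ v : H, d 0 (hinv v) = d 0 v := by
    intro v
    have h := hleft v 0 (hinv v)
    rw [hmul_zero_right, hmul_inv] at h
    rw [← h, hsymm]
  have hd_left : ∀ p q : H, d p q = d 0 (hmul (hinv p) q) := by
    intro p q
    have h := hleft (hinv p) p q
    rw [hinv_mul] at h
    exact h.symm
  have hscale : ∀ l : ℝ, 0 < l → ∀ v : H, d 0 (hdil l v) = l * d 0 v := by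
    intro l hl v
    have h0 : hdil l (0 : H) = (0 : H) := by simp [hdil]
    have h := hhom l hl 0 v
    rwa [h0] at h
  -- distance from 0 to a scaled inverse of the (xm, zm) sphere points
  have hCnorm : ∀ (n : ℕ) (t : ℝ), 0 < t →
      d 0 ((-(t * xm n), 0, -(t ^ 2 * zm n)) : H) = t := by
    intro n t ht
    have hC : ((-(t * xm n), 0, -(t ^ 2 * zm n)) : H)
        = hdil t (hinv ((xm n, 0, zm n) : H)) := by
      simp [hdil, hinv]
    rw [hC, hscale t ht, hd_symm0, hsphere_m, mul_one]
  -- key separation lemma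
  have hfar : ∀ (n nj : ℕ) (t tj : ℝ), 0 < t →
      xp n ≤ xm n - tj / t * xm nj → xm n - tj / t * xm nj ≤ xbar →
      (tj / t) ^ 2 * zm nj < zm n - zp n →
      t < d ((-(t * xm n), 0, -(t ^ 2 * zm n)) : H)
            ((-(tj * xm nj), 0, -(tj ^ 2 * zm nj)) : H) := by
    intro n nj t tj ht hA hB hC
    have ht0 : t ≠ 0 := ht.ne'
    have hv : hmul (hinv ((-(t * xm n), 0, -(t ^ 2 * zm n)) : H))
        ((-(tj * xm nj), 0, -(tj ^ 2 * zm nj)) : H)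
        = hdil t ((xm n - tj / t * xm nj, 0, zm n - (tj / t) ^ 2 * zm nj) : H) := by
      simp only [hmul, hinv, hdil, Prod.mk.injEq]
      refine ⟨by field_simp; ring, by ring, by field_simp; ring⟩
    have hT : 1 < d 0 ((xm n - tj / t * xm nj, 0, zm n - (tj / t) ^ 2 * zm nj) : H) := by
      refine hout n _ hA hB rfl ?_
      show zp n < zm n - (tj / t) ^ 2 * zm nj
      linarith
    have hd1 : d ((-(t * xm n), 0, -(t ^ 2 * zm n)) : H)
        ((-(tj * xm nj), 0, -(tj ^ 2 * zm nj)) : H)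
        = t * d 0 ((xm n - tj / t * xm nj, 0, zm n - (tj / t) ^ 2 * zm nj) : H) := by
      rw [hd_left, hv, hscale t ht]
    rw [hd1]
    have := mul_lt_mul_of_pos_left hT ht
    linarith
  have hsmall : ∀ δ : ℝ, 0 < δ → ∃ n, xp n - xm n < δ := by
    intro δ hδ
    exact (hgap.eventually (gt_mem_nhds hδ)).exists
  -- main construction, by induction on the number of balls
  have key : ∀ k : ℕ, ∃ (m : Fin (k + 1) → ℕ) (ρ : Fin (k + 1) → ℝ),
      (∀ i, 0 < ρ i) ∧ (∀ i, -xm (m i) ≤ xbar) ∧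
      (∀ i j, i ≠ j → ρ j <
        d ((-(ρ i * xm (m i)), 0, -(ρ i ^ 2 * zm (m i))) : H)
          ((-(ρ j * xm (m j)), 0, -(ρ j ^ 2 * zm (m j))) : H)) := by
    intro k
    induction k with
    | zero =>
      obtain ⟨n, hn⟩ := hsmall xbar hxbar
      refine ⟨fun _ => n, fun _ => 1, fun i => one_pos, ?_, ?_⟩
      · intro i
        have h1 := (hsign n).1
        have h2 := (hsign n).2
        simp only
        linarith
      · intro i j hij
        exact absurd ((Fin.eq_zero i).trans (Fin.eq_zero j).symm) hij
    | succ k ih =>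
      obtain ⟨m, ρ, hρ, hxb, hpair⟩ := ih
      obtain ⟨jM, hjM⟩ := Finite.exists_min (fun j => ρ j * (-(xm (m j))))
      obtain ⟨jZ, hjZ⟩ := Finite.exists_max (fun j => ρ j ^ 2 * zm (m j))
      obtain ⟨jR, hjR⟩ := Finite.exists_max ρ
      set M := ρ jM * (-(xm (m jM))) with hMdef
      set Z := ρ jZ ^ 2 * zm (m jZ) with hZdef
      set R := ρ jR with hRdef
      have hM : 0 < M := mul_pos (hρ jM) (by linarith [(hsign (m jM)).1])
      have hZ : 0 < Z := mul_pos (pow_pos (hρ jZ) 2) (lt_trans (hz (m jZ)).2 (hz (m jZ)).1)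
      have hR : 0 < R := hρ jR
      obtain ⟨n, hn⟩ := hsmall (min xbar (min (a * M ^ 2 / Z) (M / R))) (by positivity)
      have hε : 0 < xp n - xm n := by
        have h1 := (hsign n).1; have h2 := (hsign n).2; linarith
      set ε := xp n - xm n with hεdef
      have hεxbar : ε < xbar := lt_of_lt_of_le hn (min_le_left _ _)
      have hεZ : ε ≤ a * M ^ 2 / Z :=
        le_of_lt (lt_of_lt_of_le hn ((min_le_right _ _).trans (min_le_left _ _)))
      have hεR : ε ≤ M / R :=
        le_of_lt (lt_of_lt_of_le hn ((min_le_right _ _).trans (min_le_right _ _)))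
      set t := M / ε with htdef
      have ht : 0 < t := div_pos hM hε
      have hRt : R ≤ t := by
        rw [htdef, le_div_iff₀ hε]
        have h1 : R * ε ≤ R * (M / R) := mul_le_mul_of_nonneg_left hεR hR.le
        rwa [mul_div_cancel₀ _ hR.ne'] at h1
      -- the three conditions of hfar hold for the new big ball versus every old ball
      have main : ∀ j' : Fin (k + 1), t <
          d ((-(t * xm n), 0, -(t ^ 2 * zm n)) : H)
            ((-(ρ j' * xm (m j')), 0, -(ρ j' ^ 2 * zm (m j'))) : H) := by
        intro j'
        set s := ρ j' with hsdef
        set X := -(xm (m j')) with hXdef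
        have hs : 0 < s := hρ j'
        have hX : 0 < X := by have := (hsign (m j')).1; simp only [hXdef]; linarith
        have hst : s / t = s * ε / M := by
          rw [htdef, div_div_eq_mul_div]
        have hA' : ε ≤ s / t * X := by
          rw [hst, div_mul_eq_mul_div, le_div_iff₀ hM]
          have h1 : M ≤ s * X := hjM j'
          calc ε * M ≤ ε * (s * X) := mul_le_mul_of_nonneg_left h1 hε.le
            _ = s * ε * X := by ring
        have hratio : s / t ≤ 1 := by
          rw [div_le_one ht]
          exact le_trans (hjR j') hRt
        have hB' : s / t * X ≤ xbar := by
          have h1 : s / t * X ≤ 1 * X := by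
            apply mul_le_mul_of_nonneg_right hratio hX.le
          have h2 : X ≤ xbar := hxb j'
          linarith
        have hC' : (s / t) ^ 2 * zm (m j') < zm n - zp n := by
          have hZj : 0 < zm (m j') := lt_trans (hz (m j')).2 (hz (m j')).1
          have h3 : a * ε < zm n - zp n := by
            have h := hslope n
            rw [← hεdef] at h
            linarith
          have h4 : ε * Z ≤ a * M ^ 2 := (le_div_iff₀ hZ).mp hεZ
          have h1 : (s / t) ^ 2 * zm (m j') = s ^ 2 * zm (m j') * ε ^ 2 / M ^ 2 := by
            rw [hst]; field_simp
          have h2 : s ^ 2 * zm (m j') ≤ Z := hjZ j'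
          have h5 : s ^ 2 * zm (m j') * ε ^ 2 / M ^ 2 ≤ a * ε := by
            rw [div_le_iff₀ (by positivity : (0:ℝ) < M ^ 2)]
            calc s ^ 2 * zm (m j') * ε ^ 2 ≤ Z * ε ^ 2 := by nlinarith
              _ = (ε * Z) * ε := by ring
              _ ≤ (a * M ^ 2) * ε := by nlinarith
              _ = a * ε * M ^ 2 := by ring
          rw [h1]
          exact lt_of_le_of_lt h5 h3
        apply hfar n (m j') t s ht
        · have h1 := hε
          rw [hεdef] at hA'
          simp only [hXdef] at hA'
          linarith
        · simp only [hXdef] at hB'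
          have h1 := (hsign n).1
          linarith
        · exact hC'
      refine ⟨Fin.cons n m, Fin.cons t ρ, ?_, ?_, ?_⟩
      · intro i
        rcases Fin.eq_zero_or_eq_succ i with rfl | ⟨i', rfl⟩
        · simpa using ht
        · simpa using hρ i'
      · intro i
        rcases Fin.eq_zero_or_eq_succ i with rfl | ⟨i', rfl⟩
        · simp only [Fin.cons_zero]
          have h1 := (hsign n).2
          rw [hεdef] at hεxbar
          linarith
        · simpa using hxb i'
      · intro i j hij
        rcases Fin.eq_zero_or_eq_succ i with rfl | ⟨i', rfl⟩
        · rcases Fin.eq_zero_or_eq_succ j with rfl | ⟨j', rfl⟩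
          · exact absurd rfl hij
          · simp only [Fin.cons_zero, Fin.cons_succ]
            exact lt_of_le_of_lt (le_trans (hjR j') hRt) (main j')
        · rcases Fin.eq_zero_or_eq_succ j with rfl | ⟨j', rfl⟩
          · simp only [Fin.cons_zero, Fin.cons_succ]
            rw [hsymm]
            exact main i'
          · simp only [Fin.cons_succ]
            refine hpair i' j' ?_
            intro h
            exact hij (by rw [h])
  -- conclude
  intro N
  obtain ⟨m, ρ, hρ, hxb, hpair⟩ := key N
  refine ⟨fun i => ((-(ρ i * xm (m i)), 0, -(ρ i ^ 2 * zm (m i))) : H), ρ, hρ, hpair, 0, ?_⟩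
  intro i
  exact le_of_eq (hCnorm (m i) (ρ i) (hρ i))
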